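/- The infinite product ∏_{p prime} |1 − 8p²/((p−1)²(p²+1))| converges to a value greater than 1 (numerically 1.322…), while for any single odd prime p one has |1 − 8p²/((p−1)²(p²+1))| < 1. -/

import Mathlib

open Real Filter

noncomputable def Estar (p : ℕ) : ℝ :=
  |1 - 8 * (p : ℝ) ^ 2 / (((p : ℝ) - 1) ^ 2 * ((p : ℝ) ^ 2 + 1))|

namespace Stmt19Aux

/-- The quantity subtracted from 1 in `Estar`. -/
noncomputable def A (p : ℕ) : ℝ := 8 * (p : ℝ) ^ 2 / (((p : ℝ) - 1) ^ 2 * ((p : ℝ) ^ 2 + 1))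

lemma Estar_eq (p : ℕ) : Estar p = |1 - A p| := rfl

lemma aux1 {x : ℝ} (hx : 37 ≤ x) :
    0 ≤ 8 * x ^ 2 / ((x - 1) ^ 2 * (x ^ 2 + 1)) ∧
    8 * x ^ 2 / ((x - 1) ^ 2 * (x ^ 2 + 1)) ≤ 8 * (1 / (x - 2) - 1 / (x - 1)) ∧
    8 * x ^ 2 / ((x - 1) ^ 2 * (x ^ 2 + 1)) ≤ 1 / 36 := by
  have h1 : (0:ℝ) < x - 1 := by linarith
  have h2 : (0:ℝ) < x - 2 := by linarith
  have hd : (0:ℝ) < (x - 1) ^ 2 * (x ^ 2 + 1) := by positivity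
  refine ⟨by positivity, ?_, ?_⟩
  · rw [div_le_iff₀ hd]
    have : 8 * (1 / (x - 2) - 1 / (x - 1)) = 8 / ((x - 2) * (x - 1)) := by
      field_simp; ring
    rw [this, div_mul_eq_mul_div, le_div_iff₀ (by positivity)]
    nlinarith [sq_nonneg x, sq_nonneg (x-1)]
  · rw [div_le_iff₀ hd]
    have h36 : (36:ℝ) ≤ x - 1 := by linarith
    have ha : (1296:ℝ) ≤ (x-1)^2 := by nlinarith
    have hb : 1296 * x^2 ≤ (x-1)^2 * (x^2+1) := by nlinarith [sq_nonneg x]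
    linarith

lemma log_one_sub_bound {a : ℝ} (h0 : 0 ≤ a) (h1 : a ≤ 1/36) :
    -(36/35 * a) ≤ Real.log (1 - a) ∧ Real.log (1 - a) ≤ 0 := by
  have hpos : (0:ℝ) < 1 - a := by linarith
  constructor
  · have h2 := Real.log_le_sub_one_of_pos (x := (1 - a)⁻¹) (by positivity)
    rw [Real.log_inv] at h2
    have h3 : (1 - a)⁻¹ - 1 = a / (1 - a) := by field_simp; ring
    have h4 : a / (1 - a) ≤ 36/35 * a := by
      rw [div_le_iff₀ hpos]; nlinarith
    linarith
  · exact Real.log_nonpos (by linarith) (by linarith)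

def P2 : Nat.Primes := ⟨2, by norm_num⟩
def P3 : Nat.Primes := ⟨3, by norm_num⟩
def P5 : Nat.Primes := ⟨5, by norm_num⟩
def P7 : Nat.Primes := ⟨7, by norm_num⟩
def P11 : Nat.Primes := ⟨11, by norm_num⟩
def P13 : Nat.Primes := ⟨13, by norm_num⟩
def P17 : Nat.Primes := ⟨17, by norm_num⟩
def P19 : Nat.Primes := ⟨19, by norm_num⟩
def P23 : Nat.Primes := ⟨23, by norm_num⟩
def P29 : Nat.Primes := ⟨29, by norm_num⟩
def P31 : Nat.Primes := ⟨31, by norm_num⟩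

def F : Finset Nat.Primes := {P2, P3, P5, P7, P11, P13, P17, P19, P23, P29, P31}

lemma mem_F_iff {q : ℕ} (hq : q.Prime) : (⟨q, hq⟩ : Nat.Primes) ∈ F ↔
    (q = 2 ∨ q = 3 ∨ q = 5 ∨ q = 7 ∨ q = 11 ∨ q = 13 ∨ q = 17 ∨ q = 19 ∨ q = 23 ∨
      q = 29 ∨ q = 31) := by
  suffices h : ∀ x : Nat.Primes, x ∈ F ↔ ((x:ℕ) = 2 ∨ (x:ℕ) = 3 ∨ (x:ℕ) = 5 ∨ (x:ℕ) = 7 ∨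
      (x:ℕ) = 11 ∨ (x:ℕ) = 13 ∨ (x:ℕ) = 17 ∨ (x:ℕ) = 19 ∨ (x:ℕ) = 23 ∨ (x:ℕ) = 29 ∨ (x:ℕ) = 31) from
    h ⟨q, hq⟩
  intro x
  simp only [F, Finset.mem_insert, Finset.mem_singleton, ← Nat.Primes.coe_nat_inj]
  exact Iff.rfl

lemma ge37 (q : Nat.Primes) (h : q ∉ F) : 37 ≤ (q:ℕ) := by
  obtain ⟨q, hq⟩ := q
  replace h := (not_congr (mem_F_iff hq)).mp h
  push_neg at h
  simp only
  by_contra hlt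
  push_neg at hlt
  have h2 := hq.two_le
  interval_cases q <;> simp_all (config := {decide := true})

lemma head_val : ∏ p ∈ F, Estar (p:ℕ) > 1225/937 := by
  rw [F, Finset.prod_insert (by decide), Finset.prod_insert (by decide),
    Finset.prod_insert (by decide), Finset.prod_insert (by decide),
    Finset.prod_insert (by decide), Finset.prod_insert (by decide),
    Finset.prod_insert (by decide), Finset.prod_insert (by decide),
    Finset.prod_insert (by decide), Finset.prod_insert (by decide),
    Finset.prod_singleton]
  have e2 : Estar 2 = 27/5 := by rw [Estar, abs_of_nonpos (by norm_num)]; norm_num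
  have e3 : Estar 3 = 4/5 := by rw [Estar, abs_of_nonpos (by norm_num)]; norm_num
  have e5 : Estar 5 = 27/52 := by rw [Estar, abs_of_nonneg (by norm_num)]; norm_num
  have e7 : Estar 7 = 176/225 := by rw [Estar, abs_of_nonneg (by norm_num)]; norm_num
  have e11 : Estar 11 = 1404/1525 := by rw [Estar, abs_of_nonneg (by norm_num)]; norm_num
  have e13 : Estar 13 = 2891/3060 := by rw [Estar, abs_of_nonneg (by norm_num)]; norm_num
  have e17 : Estar 17 = 8991/9280 := by rw [Estar, abs_of_nonneg (by norm_num)]; norm_num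
  have e19 : Estar 19 = 14300/14661 := by rw [Estar, abs_of_nonneg (by norm_num)]; norm_num
  have e23 : Estar 23 = 31536/32065 := by rw [Estar, abs_of_nonneg (by norm_num)]; norm_num
  have e29 : Estar 29 = 81675/82516 := by rw [Estar, abs_of_nonneg (by norm_num)]; norm_num
  have e31 : Estar 31 = 107264/108225 := by rw [Estar, abs_of_nonneg (by norm_num)]; norm_num
  show Estar (P2:ℕ) * _ > _
  simp only [P2, P3, P5, P7, P11, P13, P17, P19, P23, P29, P31]
  rw [e2, e3, e5, e7, e11, e13, e17, e19, e23, e29, e31]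
  norm_num

noncomputable def g (n : ℕ) : ℝ := 8 * (1 / ((n : ℝ) + 35) - 1 / ((n : ℝ) + 36))

lemma g_nonneg (n : ℕ) : 0 ≤ g n := by
  have h1 : (0:ℝ) < (n:ℝ) + 35 := by positivity
  have h2 : ((n:ℝ) + 35) ≤ (n:ℝ) + 36 := by linarith
  have := one_div_le_one_div_of_le h1 h2
  simp only [g]; linarith

lemma hasSum_g : HasSum g (8 / 35) := by
  rw [hasSum_iff_tendsto_nat_of_nonneg g_nonneg]
  have key : ∀ n : ℕ, ∑ i ∈ Finset.range n, g i = 8 / 35 - 8 / ((n : ℝ) + 35) := by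
    intro n
    calc ∑ i ∈ Finset.range n, g i
        = ∑ i ∈ Finset.range n,
            ((fun k : ℕ => 8 / ((k : ℝ) + 35)) i - (fun k : ℕ => 8 / ((k : ℝ) + 35)) (i + 1)) := by
          refine Finset.sum_congr rfl fun i _ => ?_
          simp only [g]
          push_cast
          rw [div_sub_div _ _ (by positivity) (by positivity)]
          rw [div_sub_div _ _ (by positivity) (by positivity)]
          ring_nf
      _ = (fun k : ℕ => 8 / ((k : ℝ) + 35)) 0 - (fun k : ℕ => 8 / ((k : ℝ) + 35)) n :=
          Finset.sum_range_sub' _ n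
      _ = 8 / 35 - 8 / ((n : ℝ) + 35) := by norm_num
  simp only [key]
  have h0 : Tendsto (fun n : ℕ => 8 / ((n : ℝ) + 35)) atTop (nhds 0) := by
    have h := tendsto_const_div_atTop_nhds_zero_nat (8:ℝ)
    have h2 : Tendsto (fun n : ℕ => n + 35) atTop atTop := tendsto_add_atTop_nat 35
    exact (h.comp h2).congr fun n => by
      show (8:ℝ) / ((n + 35 : ℕ) : ℝ) = 8 / ((n : ℝ) + 35)
      push_cast; ring
  have := tendsto_const_nhds (x := (8:ℝ)/35) (f := atTop (α := ℕ)) |>.sub h0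
  simpa using this

/-- The tail index type. -/
abbrev T := {x : Nat.Primes // x ∈ (↑F : Set Nat.Primes)ᶜ}

lemma T_ge37 (q : T) : 37 ≤ ((q : Nat.Primes) : ℕ) := ge37 q.1 q.2

lemma T_ge37' (q : T) : (37:ℝ) ≤ (((q : Nat.Primes) : ℕ) : ℝ) := by
  exact_mod_cast T_ge37 q

/-- The injection from the tail into ℕ. -/
def inj (q : T) : ℕ := ((q : Nat.Primes) : ℕ) - 37

lemma inj_injective : Function.Injective inj := by
  intro a b hab
  have ha := T_ge37 a
  have hb := T_ge37 b
  have : ((a : Nat.Primes) : ℕ) = ((b : Nat.Primes) : ℕ) := by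
    simp only [inj] at hab; omega
  exact Subtype.ext (Subtype.ext this)

lemma g_inj_eq (q : T) :
    g (inj q) = 8 * (1 / ((((q : Nat.Primes) : ℕ) : ℝ) - 2) - 1 / ((((q : Nat.Primes) : ℕ) : ℝ) - 1)) := by
  have h := T_ge37 q
  simp only [g, inj]
  rw [Nat.cast_sub h]
  norm_num
  ring_nf

lemma A_bounds (q : T) :
    0 ≤ A ((q : Nat.Primes) : ℕ) ∧ A ((q : Nat.Primes) : ℕ) ≤ g (inj q) ∧
      A ((q : Nat.Primes) : ℕ) ≤ 1/36 := by
  have h := aux1 (T_ge37' q)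
  rw [g_inj_eq]
  exact ⟨h.1, h.2.1, h.2.2⟩

lemma summable_g_inj : Summable (g ∘ inj) := hasSum_g.summable.comp_injective inj_injective

lemma summable_A_T : Summable (fun q : T => A ((q : Nat.Primes) : ℕ)) :=
  Summable.of_nonneg_of_le (fun q => (A_bounds q).1) (fun q => (A_bounds q).2.1) summable_g_inj

lemma tsum_A_T_le : ∑' q : T, A ((q : Nat.Primes) : ℕ) ≤ 8/35 := by
  have h := Summable.tsum_le_tsum_of_inj inj inj_injective (fun n _ => g_nonneg n)
    (fun q => (A_bounds q).2.1) summable_A_T hasSum_g.summable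
  rw [hasSum_g.tsum_eq] at h
  exact h

lemma Estar_tail_eq (q : T) : Estar ((q : Nat.Primes) : ℕ) = 1 - A ((q : Nat.Primes) : ℕ) := by
  rw [Estar_eq, abs_of_nonneg]
  have := (A_bounds q).2.2
  linarith

lemma log_tail_bounds (q : T) :
    -(36/35 * A ((q : Nat.Primes) : ℕ)) ≤ Real.log (Estar ((q : Nat.Primes) : ℕ)) ∧
      Real.log (Estar ((q : Nat.Primes) : ℕ)) ≤ 0 := by
  rw [Estar_tail_eq]
  exact log_one_sub_bound (A_bounds q).1 (A_bounds q).2.2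

lemma summable_log_T : Summable (fun q : T => Real.log (Estar ((q : Nat.Primes) : ℕ))) := by
  apply Summable.of_norm_bounded (g := fun q : T => 36/35 * g (inj q))
    (summable_g_inj.mul_left (36/35))
  intro q
  rw [Real.norm_eq_abs, abs_of_nonpos (log_tail_bounds q).2]
  have h1 := (log_tail_bounds q).1
  have h2 := (A_bounds q).2.1
  have h3 := (A_bounds q).1
  nlinarith

lemma Estar_pos (p : Nat.Primes) : 0 < Estar (p : ℕ) := by
  obtain ⟨p, hp⟩ := p
  simp only
  have h2 := hp.two_le
  rcases eq_or_lt_of_le h2 with h | h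
  · rw [Estar, ← h, abs_of_nonpos (by norm_num)]; norm_num
  rcases eq_or_lt_of_le (show 3 ≤ p by omega) with h3 | h3
  · rw [Estar, ← h3, abs_of_nonpos (by norm_num)]; norm_num
  have h5 : 5 ≤ p := by
    by_contra hc
    push_neg at hc
    interval_cases p <;> simp_all (config := {decide := true})
  have hx : (5:ℝ) ≤ (p:ℝ) := by exact_mod_cast h5
  rw [Estar]
  have hd : (0:ℝ) < ((p:ℝ) - 1) ^ 2 * ((p:ℝ) ^ 2 + 1) :=
    mul_pos (by nlinarith) (by positivity)
  have hlt : 8 * (p:ℝ) ^ 2 / (((p:ℝ) - 1) ^ 2 * ((p:ℝ) ^ 2 + 1)) < 1 := by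
    rw [div_lt_one hd]
    have ha : (16:ℝ) ≤ ((p:ℝ)-1)^2 := by nlinarith
    nlinarith [sq_nonneg ((p:ℝ)), ha]
  have : (0:ℝ) < 1 - 8 * (p:ℝ) ^ 2 / (((p:ℝ) - 1) ^ 2 * ((p:ℝ) ^ 2 + 1)) := by linarith
  calc (0:ℝ) < 1 - 8 * (p:ℝ) ^ 2 / (((p:ℝ) - 1) ^ 2 * ((p:ℝ) ^ 2 + 1)) := this
    _ ≤ |1 - 8 * (p:ℝ) ^ 2 / (((p:ℝ) - 1) ^ 2 * ((p:ℝ) ^ 2 + 1))| := le_abs_self _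

lemma summable_log_all : Summable (fun p : Nat.Primes => Real.log (Estar (p : ℕ))) := by
  have := F.summable_compl_iff (f := fun p : Nat.Primes => Real.log (Estar (p : ℕ)))
  exact this.mp summable_log_T

lemma multipliable_Estar : Multipliable (fun p : Nat.Primes => Estar (p : ℕ)) :=
  Real.multipliable_of_summable_log (fun p => Estar_pos p) summable_log_all

lemma tail_hasProd :
    HasProd (fun q : T => Estar ((q : Nat.Primes) : ℕ))
      (Real.exp (∑' q : T, Real.log (Estar ((q : Nat.Primes) : ℕ)))) := by
  exact (summable_log_T.hasSum.rexp).congr_fun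
    (fun q => (Real.exp_log (Estar_pos q.1)).symm)

lemma tail_tprod_ge :
    (937/1225 : ℝ) ≤ ∏' q : T, Estar ((q : Nat.Primes) : ℕ) := by
  rw [tail_hasProd.tprod_eq]
  have h1 : -(288/1225 : ℝ) ≤ ∑' q : T, Real.log (Estar ((q : Nat.Primes) : ℕ)) := by
    have hle : ∀ q : T, -(36/35) * A ((q : Nat.Primes) : ℕ) ≤
        Real.log (Estar ((q : Nat.Primes) : ℕ)) := by
      intro q
      have := (log_tail_bounds q).1
      linarith
    have hs1 : Summable (fun q : T => -(36/35) * A ((q : Nat.Primes) : ℕ)) :=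
      summable_A_T.mul_left _
    have := Summable.tsum_le_tsum hle hs1 summable_log_T
    rw [tsum_mul_left] at this
    have hA := tsum_A_T_le
    nlinarith [this, hA]
  calc (937/1225 : ℝ) = -(288/1225) + 1 := by norm_num
    _ ≤ Real.exp (-(288/1225)) := Real.add_one_le_exp _
    _ ≤ Real.exp (∑' q : T, Real.log (Estar ((q : Nat.Primes) : ℕ))) := Real.exp_le_exp.mpr h1

end Stmt19Aux

open Stmt19Aux in
theorem stmt_19 :
    Multipliable (fun p : Nat.Primes => Estar p) ∧
    1 < ∏' p : Nat.Primes, Estar p ∧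
    ∀ p : ℕ, p.Prime → Odd p → Estar p < 1 := by
  refine ⟨multipliable_Estar, ?_, ?_⟩
  · have hhead_mult : Multipliable (fun x : (↑F : Set Nat.Primes) => Estar ((x : Nat.Primes) : ℕ)) :=
      ⟨_, hasProd_fintype _⟩
    have hsplit := Multipliable.tprod_mul_tprod_compl (f := fun p : Nat.Primes => Estar (p : ℕ))
      (s := (↑F : Set Nat.Primes)) hhead_mult tail_hasProd.multipliable
    rw [← hsplit]
    have hfin : (∏' x : (↑F : Set Nat.Primes), Estar ((x : Nat.Primes) : ℕ))
        = ∏ p ∈ F, Estar (p:ℕ) := by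
      rw [tprod_fintype]
      exact Finset.prod_coe_sort F (fun p => Estar (p:ℕ))
    have h1 := head_val
    have h2 := tail_tprod_ge
    have hpos : (0:ℝ) < ∏ p ∈ F, Estar (p:ℕ) := by linarith
    rw [hfin]
    calc (1:ℝ) = (1225/937) * (937/1225) := by norm_num
      _ < (∏ p ∈ F, Estar (p:ℕ)) * (937/1225) := by
          apply mul_lt_mul_of_pos_right h1; norm_num
      _ ≤ (∏ p ∈ F, Estar (p:ℕ)) * ∏' q : T, Estar ((q : Nat.Primes) : ℕ) := by
          apply mul_le_mul_of_nonneg_left h2 (le_of_lt hpos)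
  · intro p hp hodd
    have h2 : p ≠ 2 := by
      rintro rfl
      exact (Nat.not_odd_iff_even.mpr (by norm_num)) hodd
    have h3 : 3 ≤ p := by
      have := hp.two_le
      omega
    have hx : (3:ℝ) ≤ (p:ℝ) := by exact_mod_cast h3
    rw [Estar, abs_lt]
    have hd : (0:ℝ) < ((p:ℝ) - 1) ^ 2 * ((p:ℝ) ^ 2 + 1) :=
      mul_pos (by nlinarith) (by positivity)
    have hApos : 0 < 8 * (p:ℝ) ^ 2 / (((p:ℝ) - 1) ^ 2 * ((p:ℝ) ^ 2 + 1)) :=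
      div_pos (by nlinarith) hd
    have hAlt2 : 8 * (p:ℝ) ^ 2 / (((p:ℝ) - 1) ^ 2 * ((p:ℝ) ^ 2 + 1)) < 2 := by
      rw [div_lt_iff₀ hd]
      nlinarith [sq_nonneg ((p:ℝ) - 3), sq_nonneg ((p:ℝ))]
    constructor <;> linarith
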